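/- Suppose the full-horizon KKT conditions hold for ω ∈ ℝ^r with costates λ = (λ_1,…,λ_T) ∈ (ℝ^n)^T, and adopt the convention λ_{T+1} = 0. Then for every window 1 ≤ t ≤ t+l−1 ≤ T, the stacked vector (ω, λ_{t+l}) ∈ ℝ^{r+n} lies in the kernel of the recovery matrix H(t,l), i.e. H(t,l)·(ω, λ_{t+l}) = 0. -/

import Mathlib

open Matrix

noncomputable section

variable {n m r : ℕ}

/-- Block upper bidiagonal matrix `F_x(t,l)` (0-based block indices): diagonal blocks are
`I_n`, and block `(i, i+1)` is `-(A (t+i))ᵀ`. -/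
def Fx (A : ℕ → Matrix (Fin n) (Fin n) ℝ) (t l : ℕ) :
    Matrix (Fin l × Fin n) (Fin l × Fin n) ℝ :=
  fun ip jq =>
    if ip.1 = jq.1 then (if ip.2 = jq.2 then (1 : ℝ) else 0)
    else if (jq.1 : ℕ) = (ip.1 : ℕ) + 1 then -((A (t + (ip.1 : ℕ)))ᵀ ip.2 jq.2)
    else 0

/-- Block diagonal matrix `F_u(t,l)` with diagonal blocks `(B (t+i))ᵀ`. -/
def Fu (B : ℕ → Matrix (Fin n) (Fin m) ℝ) (t l : ℕ) :
    Matrix (Fin l × Fin m) (Fin l × Fin n) ℝ :=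
  fun ip jq => if ip.1 = jq.1 then (B (t + (ip.1 : ℕ)))ᵀ ip.2 jq.2 else 0

/-- Vertical stack `Φ_x(t,l)` of the blocks `(G (t+i))ᵀ`. -/
def Phix (G : ℕ → Matrix (Fin r) (Fin n) ℝ) (t l : ℕ) :
    Matrix (Fin l × Fin n) (Fin r) ℝ :=
  fun ip q => (G (t + (ip.1 : ℕ)))ᵀ ip.2 q

/-- Vertical stack `Φ_u(t,l)` of the blocks `(D (t+i))ᵀ`. -/
def Phiu (D : ℕ → Matrix (Fin r) (Fin m) ℝ) (t l : ℕ) :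
    Matrix (Fin l × Fin m) (Fin r) ℝ :=
  fun ip q => (D (t + (ip.1 : ℕ)))ᵀ ip.2 q

/-- `V(t,l)`: all `n×n` blocks zero except the last one, which is `(A (t+l-1))ᵀ`. -/
def Vm (A : ℕ → Matrix (Fin n) (Fin n) ℝ) (t l : ℕ) :
    Matrix (Fin l × Fin n) (Fin n) ℝ :=
  fun ip q => if (ip.1 : ℕ) = l - 1 then (A (t + l - 1))ᵀ ip.2 q else 0

/-- `H₁(t,l) = F_u(t,l) · F_x(t,l)⁻¹ · Φ_x(t,l) + Φ_u(t,l)`. -/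
def H1m (A : ℕ → Matrix (Fin n) (Fin n) ℝ) (B : ℕ → Matrix (Fin n) (Fin m) ℝ)
    (G : ℕ → Matrix (Fin r) (Fin n) ℝ) (D : ℕ → Matrix (Fin r) (Fin m) ℝ) (t l : ℕ) :
    Matrix (Fin l × Fin m) (Fin r) ℝ :=
  Fu B t l * (Fx A t l)⁻¹ * Phix G t l + Phiu D t l

/-- `H₂(t,l) = F_u(t,l) · F_x(t,l)⁻¹ · V(t,l)`. -/
def H2m (A : ℕ → Matrix (Fin n) (Fin n) ℝ) (B : ℕ → Matrix (Fin n) (Fin m) ℝ) (t l : ℕ) :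
    Matrix (Fin l × Fin m) (Fin n) ℝ :=
  Fu B t l * (Fx A t l)⁻¹ * Vm A t l

/-- The recovery matrix `H(t,l) = [H₁(t,l)  H₂(t,l)]`. -/
def Hm (A : ℕ → Matrix (Fin n) (Fin n) ℝ) (B : ℕ → Matrix (Fin n) (Fin m) ℝ)
    (G : ℕ → Matrix (Fin r) (Fin n) ℝ) (D : ℕ → Matrix (Fin r) (Fin m) ℝ) (t l : ℕ) :
    Matrix (Fin l × Fin m) (Fin r ⊕ Fin n) ℝ :=
  fromCols (H1m A B G D t l) (H2m A B t l)

/-- Stack the vectors `lam t, lam (t+1), …, lam (t+l-1)` into a vector in `ℝ^{nl}`. -/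
def stackVec (lam : ℕ → Fin n → ℝ) (t l : ℕ) : Fin l × Fin n → ℝ :=
  fun ip => lam (t + (ip.1 : ℕ)) ip.2

/-- Full-horizon KKT conditions for the weight vector `ω` with costates `lam 1, …, lam T`. -/
def KKT (A : ℕ → Matrix (Fin n) (Fin n) ℝ) (B : ℕ → Matrix (Fin n) (Fin m) ℝ)
    (G : ℕ → Matrix (Fin r) (Fin n) ℝ) (D : ℕ → Matrix (Fin r) (Fin m) ℝ) (T : ℕ)
    (ω : Fin r → ℝ) (lam : ℕ → Fin n → ℝ) : Prop :=
  -(Fx A 1 T *ᵥ stackVec lam 1 T) + Phix G 1 T *ᵥ ω = 0 ∧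
    Fu B 1 T *ᵥ stackVec lam 1 T + Phiu D 1 T *ᵥ ω = 0

/-- The natural identification of `ℝ^{(l+1)·ι}`-indices with `ℝ^{l·ι} × ℝ^{ι}`-indices. -/
def splitIdx (l : ℕ) (ι : Type*) : Fin (l + 1) × ι → (Fin l × ι) ⊕ ι :=
  fun ip => if h : (ip.1 : ℕ) < l then Sum.inl (⟨ip.1, h⟩, ip.2) else Sum.inr ip.2

/-- Strictly block-superdiagonal part of `Fx`. -/
def Nx (A : ℕ → Matrix (Fin n) (Fin n) ℝ) (t l : ℕ) :
    Matrix (Fin l × Fin n) (Fin l × Fin n) ℝ :=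
  fun ip jq => if (jq.1 : ℕ) = (ip.1 : ℕ) + 1 then -((A (t + (ip.1 : ℕ)))ᵀ ip.2 jq.2) else 0

lemma Fx_eq (A : ℕ → Matrix (Fin n) (Fin n) ℝ) (t l : ℕ) :
    Fx A t l = 1 + Nx A t l := by
  ext ⟨i, p⟩ ⟨j, q⟩
  simp only [Fx, Nx, Matrix.add_apply, Matrix.one_apply, Prod.mk.injEq]
  by_cases hij : i = j
  · subst hij
    have h1 : ¬ ((i : ℕ) = (i : ℕ) + 1) := by omega
    by_cases hpq : p = q <;> simp [hpq, h1]
  · have h2 : ¬ (i = j ∧ p = q) := fun h => hij h.1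
    simp [hij, h2]

lemma Nx_mulVec (A : ℕ → Matrix (Fin n) (Fin n) ℝ) (t l : ℕ)
    (x : Fin l × Fin n → ℝ) (i : Fin l) (p : Fin n) :
    (Nx A t l *ᵥ x) (i, p) =
      if h : (i : ℕ) + 1 < l then
        ∑ q, -((A (t + (i : ℕ)))ᵀ p q) * x (⟨(i : ℕ) + 1, h⟩, q)
      else 0 := by
  rw [Matrix.mulVec, dotProduct, Fintype.sum_prod_type]
  split_ifs with h
  · rw [Finset.sum_eq_single (⟨(i : ℕ) + 1, h⟩ : Fin l)]
    · simp [Nx]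
    · intro j _ hj
      have hj' : ¬ ((j : ℕ) = (i : ℕ) + 1) := fun hc => hj (Fin.ext hc)
      simp [Nx, hj']
    · simp
  · apply Finset.sum_eq_zero
    intro j _
    have hjl := j.isLt
    have hj' : ¬ ((j : ℕ) = (i : ℕ) + 1) := by omega
    simp [Nx, hj']

lemma Fu_mulVec (B : ℕ → Matrix (Fin n) (Fin m) ℝ) (t l : ℕ)
    (x : Fin l × Fin n → ℝ) (i : Fin l) (p : Fin m) :
    (Fu B t l *ᵥ x) (i, p) = ∑ q, (B (t + (i : ℕ)))ᵀ p q * x (i, q) := by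
  rw [Matrix.mulVec, dotProduct, Fintype.sum_prod_type]
  rw [Finset.sum_eq_single i]
  · simp [Fu]
  · intro j _ hj
    simp [Fu, (Ne.symm hj : i ≠ j)]
  · simp

lemma Vm_mulVec (A : ℕ → Matrix (Fin n) (Fin n) ℝ) (t l : ℕ)
    (v : Fin n → ℝ) (i : Fin l) (p : Fin n) :
    (Vm A t l *ᵥ v) (i, p) =
      if (i : ℕ) = l - 1 then ∑ q, (A (t + l - 1))ᵀ p q * v q else 0 := by
  rw [Matrix.mulVec, dotProduct]
  split_ifs with h
  · apply Finset.sum_congr rfl; intro q _; simp [Vm, h]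
  · apply Finset.sum_eq_zero; intro q _; simp [Vm, h]

/-- The costate recursion extracted from the first KKT condition. -/
lemma costate_eq {T : ℕ} (A : ℕ → Matrix (Fin n) (Fin n) ℝ)
    (G : ℕ → Matrix (Fin r) (Fin n) ℝ) (ω : Fin r → ℝ) (lam : ℕ → Fin n → ℝ)
    (hAT : A T = 1) (hlamT : lam (T + 1) = 0)
    (h1 : -(Fx A 1 T *ᵥ stackVec lam 1 T) + Phix G 1 T *ᵥ ω = 0)
    (k : ℕ) (hk1 : 1 ≤ k) (hkT : k ≤ T) (p : Fin n) :
    lam k p = (∑ q, (A k)ᵀ p q * lam (k + 1) q) + ∑ q, (G k)ᵀ p q * ω q := by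
  have hi : k - 1 < T := by omega
  have ek : 1 + (k - 1) = k := by omega
  have hfun := congrFun h1 (⟨k - 1, hi⟩, p)
  rw [Fx_eq] at hfun
  simp only [Pi.add_apply, Pi.neg_apply, Pi.zero_apply, Matrix.add_mulVec,
    Matrix.one_mulVec] at hfun
  rw [Nx_mulVec] at hfun
  have hst : stackVec lam 1 T (⟨k - 1, hi⟩, p) = lam k p := by
    show lam (1 + (k - 1)) p = lam k p
    rw [ek]
  have hph : (Phix G 1 T *ᵥ ω) (⟨k - 1, hi⟩, p) = ∑ q, (G k)ᵀ p q * ω q := by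
    rw [Matrix.mulVec, dotProduct]
    apply Finset.sum_congr rfl
    intro q _
    show (G (1 + (k - 1)))ᵀ p q * ω q = (G k)ᵀ p q * ω q
    rw [ek]
  rw [hst, hph] at hfun
  by_cases h : (k - 1 : ℕ) + 1 < T
  · rw [dif_pos h] at hfun
    have hst2 : ∀ q, stackVec lam 1 T (⟨k - 1 + 1, h⟩, q) = lam (k + 1) q := by
      intro q
      show lam (1 + (k - 1 + 1)) q = lam (k + 1) q
      congr 1
      omega

    have hA : ∀ q, (A (1 + (k - 1)))ᵀ p q = (A k)ᵀ p q := by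
      intro q; rw [ek]
    simp only [hst2, hA, neg_mul, Finset.sum_neg_distrib] at hfun
    linarith
  · rw [dif_neg h] at hfun
    have hkT' : k = T := by omega
    subst hkT'
    rw [hAT, hlamT]
    simp only [Pi.zero_apply, mul_zero, Finset.sum_const_zero, zero_add]
    linarith

/-- The control equation extracted from the second KKT condition. -/
lemma control_eq {T : ℕ} (B : ℕ → Matrix (Fin n) (Fin m) ℝ)
    (D : ℕ → Matrix (Fin r) (Fin m) ℝ) (ω : Fin r → ℝ) (lam : ℕ → Fin n → ℝ)
    (h2 : Fu B 1 T *ᵥ stackVec lam 1 T + Phiu D 1 T *ᵥ ω = 0)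
    (k : ℕ) (hk1 : 1 ≤ k) (hkT : k ≤ T) (p : Fin m) :
    (∑ q, (B k)ᵀ p q * lam k q) + ∑ q, (D k)ᵀ p q * ω q = 0 := by
  have hi : k - 1 < T := by omega
  have ek : 1 + (k - 1) = k := by omega
  have hfun := congrFun h2 (⟨k - 1, hi⟩, p)
  simp only [Pi.add_apply, Pi.zero_apply] at hfun
  rw [Fu_mulVec] at hfun
  have hst : ∀ q, stackVec lam 1 T ((⟨k - 1, hi⟩ : Fin T), q) = lam k q := by
    intro q
    show lam (1 + (k - 1)) q = lam k q
    rw [ek]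
  have hB : ∀ q : Fin n, (B (1 + (k - 1)))ᵀ p q = (B k)ᵀ p q := by
    intro q; rw [ek]
  have hph : (Phiu D 1 T *ᵥ ω) (⟨k - 1, hi⟩, p) = ∑ q, (D k)ᵀ p q * ω q := by
    rw [Matrix.mulVec, dotProduct]
    apply Finset.sum_congr rfl
    intro q _
    show (D (1 + (k - 1)))ᵀ p q * ω q = (D k)ᵀ p q * ω q
    rw [ek]
  rw [hph] at hfun
  simp only [hst, hB] at hfun
  exact hfun

lemma Fx_blockTriangular (A : ℕ → Matrix (Fin n) (Fin n) ℝ) (t l : ℕ) :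
    (Fx A t l).BlockTriangular Prod.fst := by
  intro ip jq h
  have h1 : ip.1 ≠ jq.1 := fun hc => absurd hc.symm (ne_of_lt h)
  have h2 : ¬ ((jq.1 : ℕ) = (ip.1 : ℕ) + 1) := by
    have := Fin.lt_iff_val_lt_val.mp h
    omega
  simp [Fx, h1, h2]

lemma Fx_det_isUnit (A : ℕ → Matrix (Fin n) (Fin n) ℝ) (t l : ℕ) :
    IsUnit (Fx A t l).det := by
  rw [(Fx_blockTriangular A t l).det]
  apply isUnit_of_mul_isUnit_left (y := 1)
  rw [mul_one]
  refine Finset.prod_induction _ IsUnit (fun a b => IsUnit.mul) isUnit_one ?_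
  intro a _
  have hb : (Fx A t l).toSquareBlock Prod.fst a = 1 := by
    ext x y
    have hx := x.2
    have hy := y.2
    simp only [Matrix.toSquareBlock_def, Fx, Matrix.one_apply, Subtype.ext_iff, Prod.ext_iff]
    have hxy : x.1.1 = y.1.1 := by rw [hx, hy]
    simp [hxy]
  rw [hb, Matrix.det_one]
  exact isUnit_one

/-- The key window identity `Fx (t,l) * λ_window = Phix (t,l) ω + V (t,l) λ_{t+l}`. -/
lemma window_eq {T : ℕ} (A : ℕ → Matrix (Fin n) (Fin n) ℝ)
    (G : ℕ → Matrix (Fin r) (Fin n) ℝ) (ω : Fin r → ℝ) (lam : ℕ → Fin n → ℝ)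
    (hAT : A T = 1) (hlamT : lam (T + 1) = 0)
    (h1 : -(Fx A 1 T *ᵥ stackVec lam 1 T) + Phix G 1 T *ᵥ ω = 0)
    (t l : ℕ) (ht : 1 ≤ t) (hl : 1 ≤ l) (htl : t + l - 1 ≤ T) :
    Fx A t l *ᵥ stackVec lam t l = Phix G t l *ᵥ ω + Vm A t l *ᵥ lam (t + l) := by
  funext ip
  obtain ⟨i, p⟩ := ip
  have hil := i.isLt
  have hcost := costate_eq A G ω lam hAT hlamT h1 (t + (i : ℕ)) (by omega) (by omega) p
  rw [Fx_eq, Matrix.add_mulVec, Matrix.one_mulVec, Pi.add_apply, Nx_mulVec]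
  rw [Pi.add_apply, Vm_mulVec]
  have hph : (Phix G t l *ᵥ ω) (i, p) = ∑ q, (G (t + (i : ℕ)))ᵀ p q * ω q := by
    rw [Matrix.mulVec, dotProduct]; rfl
  rw [hph]
  have hst : stackVec lam t l (i, p) = lam (t + (i : ℕ)) p := rfl
  rw [hst, hcost]
  by_cases h : (i : ℕ) + 1 < l
  · rw [dif_pos h, if_neg (by omega)]
    have hst2 : ∀ q, stackVec lam t l (⟨(i : ℕ) + 1, h⟩, q) = lam (t + (i : ℕ) + 1) q := by
      intro q; simp only [stackVec]; congr 1
    simp only [hst2, neg_mul, Finset.sum_neg_distrib]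
    ring
  · rw [dif_neg h, if_pos (by omega)]
    have e1 : t + (i : ℕ) = t + l - 1 := by omega
    have e2 : t + (i : ℕ) + 1 = t + l := by omega
    rw [e2, e1]
    ring

/-- If the full-horizon KKT conditions hold (with the convention `λ_{T+1} = 0`), then for
every window `1 ≤ t ≤ t+l−1 ≤ T` the stacked vector `(ω, λ_{t+l})` lies in the kernel of the
recovery matrix `H(t,l)`. -/
theorem kernel_of_KKT (n m r T : ℕ) (hn : 0 < n) (hm : 0 < m) (hr : 0 < r) (hT : 1 ≤ T)
    (A : ℕ → Matrix (Fin n) (Fin n) ℝ) (B : ℕ → Matrix (Fin n) (Fin m) ℝ)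
    (G : ℕ → Matrix (Fin r) (Fin n) ℝ) (D : ℕ → Matrix (Fin r) (Fin m) ℝ)
    (hAT : A T = 1)
    (ω : Fin r → ℝ) (lam : ℕ → Fin n → ℝ)
    (hKKT : KKT A B G D T ω lam) (hlamT : lam (T + 1) = 0)
    (t l : ℕ) (ht : 1 ≤ t) (hl : 1 ≤ l) (htl : t + l - 1 ≤ T) :
    Hm A B G D t l *ᵥ Sum.elim ω (lam (t + l)) = 0 := by
  obtain ⟨h1, h2⟩ := hKKT
  have hwin := window_eq A G ω lam hAT hlamT h1 t l ht hl htl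
  have hinv : (Fx A t l)⁻¹ * Fx A t l = 1 :=
    Matrix.nonsing_inv_mul _ (Fx_det_isUnit A t l)
  rw [Hm, fromCols_mulVec_sumElim, H1m, H2m, Matrix.add_mulVec]
  have key : (Fu B t l * (Fx A t l)⁻¹ * Phix G t l) *ᵥ ω
      + (Fu B t l * (Fx A t l)⁻¹ * Vm A t l) *ᵥ lam (t + l)
      = Fu B t l *ᵥ stackVec lam t l := by
    have e1 : ∀ (M : Matrix (Fin l × Fin n) (Fin r) ℝ) (v : Fin r → ℝ),
        (Fu B t l * (Fx A t l)⁻¹ * M) *ᵥ v = (Fu B t l * (Fx A t l)⁻¹) *ᵥ (M *ᵥ v) :=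
      fun M v => (Matrix.mulVec_mulVec v _ M).symm
    have e2 : ∀ (M : Matrix (Fin l × Fin n) (Fin n) ℝ) (v : Fin n → ℝ),
        (Fu B t l * (Fx A t l)⁻¹ * M) *ᵥ v = (Fu B t l * (Fx A t l)⁻¹) *ᵥ (M *ᵥ v) :=
      fun M v => (Matrix.mulVec_mulVec v _ M).symm
    rw [e1, e2, ← Matrix.mulVec_add, ← hwin, Matrix.mulVec_mulVec, Matrix.mul_assoc, hinv, Matrix.mul_one]
  have hgoal : Fu B t l *ᵥ stackVec lam t l + Phiu D t l *ᵥ ω = 0 := by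
    funext ip
    obtain ⟨i, p⟩ := ip
    have hil := i.isLt
    have hctrl := control_eq B D ω lam h2 (t + (i : ℕ)) (by omega) (by omega) p
    rw [Pi.add_apply, Fu_mulVec, Pi.zero_apply]
    have hph : (Phiu D t l *ᵥ ω) (i, p) = ∑ q, (D (t + (i : ℕ)))ᵀ p q * ω q := by
      rw [Matrix.mulVec, dotProduct]; rfl
    rw [hph]
    have hst : ∀ q, stackVec lam t l (i, q) = lam (t + (i : ℕ)) q := fun q => rfl
    simp only [hst]
    exact hctrl
  calc (Fu B t l * (Fx A t l)⁻¹ * Phix G t l) *ᵥ ω + Phiu D t l *ᵥ ω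
        + (Fu B t l * (Fx A t l)⁻¹ * Vm A t l) *ᵥ lam (t + l)
      = (Fu B t l * (Fx A t l)⁻¹ * Phix G t l) *ᵥ ω
        + (Fu B t l * (Fx A t l)⁻¹ * Vm A t l) *ᵥ lam (t + l) + Phiu D t l *ᵥ ω := by
        abel
    _ = Fu B t l *ᵥ stackVec lam t l + Phiu D t l *ᵥ ω := by rw [key]
    _ = 0 := hgoal

end
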